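/- Let w be a Kreweras word of length 3n. Then ε_{pro(w)}(i) = ε_w(i+1) for all 1 ≤ i ≤ 3n−1, and ε_{pro(w)}(3n) = −ε_w(1), where −B := C and −C := B. -/

import Mathlib

/-- The three letters of a Kreweras word. -/
inductive KLetter : Type
  | A | B | C
deriving DecidableEq, Repr

open KLetter

/-- `w` is a Kreweras word of length `3 * n`: it has `n` `A`'s, `n` `B`'s, `n` `C`'s,
and every prefix has at least as many `A`'s as `B`'s and at least as many `A`'s as `C`'s. -/
def IsKrewerasWord (n : ℕ) (w : List KLetter) : Prop :=
  w.length = 3 * n ∧ w.count A = n ∧ w.count B = n ∧ w.count C = n ∧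
  ∀ k : ℕ, (w.take k).count B ≤ (w.take k).count A ∧
           (w.take k).count C ≤ (w.take k).count A

/-- `kiota w` is the smallest index `ι ≥ 1` (1-indexed) such that the prefix of
length `ι` of `w` has equally many `A`'s as `B`'s, or equally many `A`'s as `C`'s
(and `0` if no such index exists). -/
def kiota (w : List KLetter) : ℕ :=
  (((List.range (w.length + 1)).filter fun k =>
      decide (1 ≤ k) &&
      (((w.take k).count A == (w.take k).count B) ||
       ((w.take k).count A == (w.take k).count C))).headD 0)

/-- Promotion of a Kreweras word:
`pro w = (w₂, …, w_{ι-1}, A, w_{ι+1}, …, w_{3n}, w_ι)` where `ι = kiota w`. -/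
def pro (w : List KLetter) : List KLetter :=
  ((w.drop 1).set (kiota w - 2) A) ++ [w.getD (kiota w - 1) A]

/-- The trip permutation `σ_w` of a Kreweras word of length `3 * n`, as a function on
1-indexed positions: `σ_w i` is the unique element of `{1, …, 3n}` congruent to
`kiota (pro^[i-1] w) + i - 1` modulo `3 * n`. -/
def ksigma (n : ℕ) (w : List KLetter) (i : ℕ) : ℕ :=
  (kiota (pro^[i - 1] w) + i - 2) % (3 * n) + 1

/-- `keps w i` is the letter of `pro^[i-1] w` in (1-indexed) position `kiota (pro^[i-1] w)`. -/
def keps (w : List KLetter) (i : ℕ) : KLetter :=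
  (pro^[i - 1] w).getD (kiota (pro^[i - 1] w) - 1) A

/-- The negation swapping `B` and `C` (and fixing `A`). -/
def negL : KLetter → KLetter
  | A => A
  | B => C
  | C => B

open Classical in
/-- The involution `τ_i` on Kreweras words of length `3 * n`: swap the letters in
(1-indexed) positions `i` and `i + 1` if the result is again a Kreweras word,
and otherwise do nothing. -/
noncomputable def tau (n i : ℕ) (w : List KLetter) : List KLetter :=
  let w' := (w.set (i - 1) (w.getD i A)).set i (w.getD (i - 1) A)
  if IsKrewerasWord n w' then w' else w

/-- `tauDown n j = τ_j ∘ τ_{j-1} ∘ ⋯ ∘ τ_1`. -/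
noncomputable def tauDown (n : ℕ) : ℕ → List KLetter → List KLetter
  | 0, w => w
  | j + 1, w => tau n (j + 1) (tauDown n j w)

/-- `evacAux n j = (tauDown n 1) ∘ (tauDown n 2) ∘ ⋯ ∘ (tauDown n j)`. -/
noncomputable def evacAux (n : ℕ) : ℕ → List KLetter → List KLetter
  | 0, w => w
  | j + 1, w => evacAux n j (tauDown n (j + 1) w)

/-- Evacuation on Kreweras words of length `3 * n`:
`evac = (τ_1) ∘ (τ_2 ∘ τ_1) ∘ ⋯ ∘ (τ_{3n-1} ∘ ⋯ ∘ τ_2 ∘ τ_1)`. -/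
noncomputable def evac (n : ℕ) (w : List KLetter) : List KLetter :=
  evacAux n (3 * n - 1) w

/-- `tauAsc n k c = τ_{k+c-1} ∘ ⋯ ∘ τ_{k+1} ∘ τ_k`. -/
noncomputable def tauAsc (n k : ℕ) : ℕ → List KLetter → List KLetter
  | 0, w => w
  | j + 1, w => tau n (k + j) (tauAsc n k j w)

/-- `evacStarAux n j = (tauAsc n 1 (3n-1)) ∘ (tauAsc n 2 (3n-2)) ∘ ⋯ ∘ (tauAsc n j (3n-j))`. -/
noncomputable def evacStarAux (n : ℕ) : ℕ → List KLetter → List KLetter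
  | 0, w => w
  | j + 1, w => evacStarAux n j (tauAsc n (j + 1) (3 * n - (j + 1)) w)

/-- Dual evacuation on Kreweras words of length `3 * n`:
`evac* = (τ_{3n-1} ∘ ⋯ ∘ τ_1) ∘ (τ_{3n-1} ∘ ⋯ ∘ τ_2) ∘ ⋯ ∘ (τ_{3n-1})`. -/
noncomputable def evacStar (n : ℕ) (w : List KLetter) : List KLetter :=
  evacStarAux n (3 * n - 1) w

/-- The three-element "V"-shaped poset: `a < b`, `a < c`, with `b`, `c` incomparable. -/
inductive VP : Type
  | a | b | c
deriving DecidableEq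

instance : PartialOrder VP where
  le x y := x = y ∨ x = VP.a
  le_refl x := Or.inl rfl
  le_trans x y z hxy hyz := by
    rcases hxy with rfl | rfl
    · exact hyz
    · exact Or.inr rfl
  le_antisymm x y hxy hyx := by
    rcases hxy with rfl | rfl
    · rfl
    · rcases hyx with rfl | rfl <;> rfl

/-- The labeling of elements of `V(n) = VP × Fin n` by letters. -/
def vlabel {n : ℕ} (p : VP × Fin n) : KLetter :=
  match p.1 with
  | VP.a => A
  | VP.b => B
  | VP.c => C

/-- `L` is a linear extension of `V(n) = VP × Fin n` (with the product order):
a list of all elements of `V(n)`, each appearing once, such that `L_i ≤ L_j`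
implies `i ≤ j`. -/
def IsLinearExtension (n : ℕ) (L : List (VP × Fin n)) : Prop :=
  L.Nodup ∧ (∀ p : VP × Fin n, p ∈ L) ∧
  ∀ i j : Fin L.length, L.get i ≤ L.get j → (i : ℕ) ≤ (j : ℕ)

/-- A connected Kreweras word: a Kreweras word of length `3 * n` having no proper
nonempty consecutive substring which is itself a Kreweras word. -/
def ConnectedKrewerasWord (n : ℕ) (w : List KLetter) : Prop :=
  IsKrewerasWord n w ∧
  ∀ (u : List KLetter) (m : ℕ), u <:+: w → u ≠ [] → u ≠ w → ¬ IsKrewerasWord m u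

namespace KP
open KLetter

/-- prefix count -/
def cnt (y : KLetter) (k : ℕ) (v : List KLetter) : ℕ := (v.take k).count y

lemma cnt_zero (y : KLetter) (v : List KLetter) : cnt y 0 v = 0 := by simp [cnt]

lemma count_single (y z : KLetter) : List.count y [z] = if z = y then 1 else 0 := by
  simp [List.count_singleton]

lemma cnt_succ (y : KLetter) (k : ℕ) (v : List KLetter) (h : k < v.length) :
    cnt y (k + 1) v = cnt y k v + (if v.getD k A = y then 1 else 0) := by
  have h1 : v.take (k+1) = v.take k ++ v[k]?.toList := List.take_succ
  have h2 : v[k]? = some v[k] := List.getElem?_eq_getElem h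
  have h3 : v.getD k A = v[k] := List.getD_eq_getElem v A h
  simp only [cnt, h1, h2, List.count_append, Option.toList_some, h3, count_single]

lemma cnt_stable (y : KLetter) (k : ℕ) (v : List KLetter) (h : v.length ≤ k) :
    cnt y k v = v.count y := by
  simp [cnt, List.take_of_length_le h]

/-- The `Bool`-valued predicate underlying `kiota`. -/
def Pk (w : List KLetter) (k : ℕ) : Bool :=
  decide (1 ≤ k) &&
      (((w.take k).count A == (w.take k).count B) ||
       ((w.take k).count A == (w.take k).count C))

lemma kiota_eq_headD (w : List KLetter) :
    kiota w = (((List.range (w.length + 1)).filter (Pk w)).headD 0) := rfl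

lemma headD_filter_range (P : ℕ → Bool) :
    ∀ (m k₀ : ℕ), k₀ < m → P k₀ = true →
      ((((List.range m).filter P).headD 0 ≤ k₀ ∧
        P (((List.range m).filter P).headD 0) = true) ∧
       ∀ j < ((List.range m).filter P).headD 0, P j = false) := by
  intro m
  induction m with
  | zero => intro k₀ h; omega
  | succ m ih =>
    intro k₀ hk₀ hP
    rw [List.range_succ, List.filter_append]
    rcases hfr : (List.range m).filter P with _ | ⟨a, t⟩
    · -- no element below m satisfies P
      have hmin : ∀ j < m, P j = false := by
        intro j hj
        by_contra hPj
        have : j ∈ (List.range m).filter P := by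
          rw [List.mem_filter, List.mem_range]
          exact ⟨hj, by simpa using hPj⟩
        rw [hfr] at this; simp at this
      have hk : k₀ = m := by
        by_contra hne
        have : k₀ < m := by omega
        have := hmin k₀ this
        rw [hP] at this; simp at this
      subst hk
      simp [hP]
      exact hmin
    · have ha : a ∈ (List.range m).filter P := by rw [hfr]; exact List.mem_cons_self
      rw [List.mem_filter, List.mem_range] at ha
      have := ih a ha.1 ha.2
      rw [hfr] at this
      simp only [List.cons_append, List.headD_cons] at this ⊢
      refine ⟨⟨?_, ha.2⟩, this.2⟩
      by_contra hlt
      have := this.2 k₀ (by omega)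
      rw [hP] at this; simp at this

lemma kiota_spec (w : List KLetter) (k₀ : ℕ) (h1 : k₀ ≤ w.length) (h2 : Pk w k₀ = true) :
    (kiota w ≤ k₀ ∧ Pk w (kiota w) = true) ∧ ∀ j < kiota w, Pk w j = false := by
  rw [kiota_eq_headD]
  exact headD_filter_range (Pk w) (w.length + 1) k₀ (by omega) h2


/-! ### Basic facts about Kreweras words -/

section KrewFacts

variable {n : ℕ} {v : List KLetter}

lemma cnt_le_A (hv : IsKrewerasWord n v) (k : ℕ) :
    cnt B k v ≤ cnt A k v ∧ cnt C k v ≤ cnt A k v := hv.2.2.2.2 k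

lemma first_A (hv : IsKrewerasWord n v) (hn : 1 ≤ n) : v.getD 0 A = A := by
  have hlen : v.length = 3 * n := hv.1
  have h := hv.2.2.2.2 1
  rcases v with _ | ⟨a, t⟩
  · simp at hlen; omega
  · cases a
    · rfl
    · exfalso; simp [List.take_succ, List.count_singleton] at h
    · exfalso; simp [List.take_succ, List.count_singleton] at h

lemma take_one_eq (hv : IsKrewerasWord n v) (hn : 1 ≤ n) : v.take 1 = [A] := by
  have h0 := first_A hv hn
  have hlen : v.length = 3 * n := hv.1
  rcases v with _ | ⟨a, t⟩
  · simp at hlen; omega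
  · simp [List.getD_cons_zero] at h0; simp [h0]

lemma cnt_one (hv : IsKrewerasWord n v) (hn : 1 ≤ n) (y : KLetter) :
    cnt y 1 v = if A = y then 1 else 0 := by
  rw [cnt, take_one_eq hv hn, count_single]

lemma Pk_top (hv : IsKrewerasWord n v) (hn : 1 ≤ n) : Pk v (3 * n) = true := by
  have h1 : cnt A (3*n) v = n := by rw [cnt_stable A _ _ (le_of_eq hv.1), hv.2.1]
  have h2 : cnt B (3*n) v = n := by rw [cnt_stable B _ _ (le_of_eq hv.1), hv.2.2.1]
  unfold Pk
  rw [show (v.take (3*n)).count A = cnt A (3*n) v from rfl,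
      show (v.take (3*n)).count B = cnt B (3*n) v from rfl, h1, h2]
  simp; omega

lemma kiota_facts (hv : IsKrewerasWord n v) (hn : 1 ≤ n) :
    (kiota v ≤ 3 * n ∧ Pk v (kiota v) = true) ∧ ∀ j < kiota v, Pk v j = false := by
  exact kiota_spec v (3*n) (le_of_eq hv.1.symm) (Pk_top hv hn)

lemma kiota_le (hv : IsKrewerasWord n v) (hn : 1 ≤ n) : kiota v ≤ 3 * n :=
  (kiota_facts hv hn).1.1

lemma Pk_kiota (hv : IsKrewerasWord n v) (hn : 1 ≤ n) : Pk v (kiota v) = true :=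
  (kiota_facts hv hn).1.2

lemma kiota_min (hv : IsKrewerasWord n v) (hn : 1 ≤ n) :
    ∀ j < kiota v, Pk v j = false := (kiota_facts hv hn).2

lemma Pk_iff (w : List KLetter) (k : ℕ) :
    Pk w k = true ↔ (1 ≤ k ∧ (cnt A k w = cnt B k w ∨ cnt A k w = cnt C k w)) := by
  unfold Pk
  rw [show (w.take k).count A = cnt A k w from rfl, show (w.take k).count B = cnt B k w from rfl,
      show (w.take k).count C = cnt C k w from rfl]
  simp

lemma two_le_kiota (hv : IsKrewerasWord n v) (hn : 1 ≤ n) : 2 ≤ kiota v := by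
  have hP := Pk_kiota hv hn
  rw [Pk_iff] at hP
  have h1 : kiota v ≠ 1 := by
    intro h
    rw [h] at hP
    rw [cnt_one hv hn, cnt_one hv hn, cnt_one hv hn] at hP
    simp at hP
  omega

lemma cnt_strict (hv : IsKrewerasWord n v) (hn : 1 ≤ n) (k : ℕ) (h1 : 1 ≤ k)
    (h2 : k < kiota v) : cnt B k v < cnt A k v ∧ cnt C k v < cnt A k v := by
  have hP := kiota_min hv hn k h2
  have : ¬ (1 ≤ k ∧ (cnt A k v = cnt B k v ∨ cnt A k v = cnt C k v)) := by
    rw [← Pk_iff]; simp [hP]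
  have hle := cnt_le_A hv k
  omega

/-- The letter at position `kiota` is `B` or `C`, with the matching equality of counts. -/
lemma kiota_letter (hv : IsKrewerasWord n v) (hn : 1 ≤ n) :
    ∃ x o : KLetter, v.getD (kiota v - 1) A = x ∧
      ((x = B ∧ o = C) ∨ (x = C ∧ o = B)) ∧
      cnt A (kiota v) v = cnt x (kiota v) v ∧
      cnt o (kiota v) v < cnt A (kiota v) v := by
  set ι := kiota v with hι
  have h2 : 2 ≤ ι := two_le_kiota hv hn
  have h3 : ι ≤ 3 * n := kiota_le hv hn
  have hlt : ι - 1 < v.length := by rw [hv.1]; omega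
  have hs : ∀ y, cnt y ι v = cnt y (ι - 1) v + (if v.getD (ι-1) A = y then 1 else 0) := by
    intro y
    have := cnt_succ y (ι - 1) v hlt
    rw [show ι - 1 + 1 = ι by omega] at this
    exact this
  have hstrict := cnt_strict hv hn (ι - 1) (by omega) (by omega)
  have hP := Pk_kiota hv hn
  rw [Pk_iff] at hP
  rw [← hι] at hP
  rcases hz : v.getD (ι-1) A with _ | _ | _
  · exfalso
    have hB := hs B; have hC := hs C; have hA := hs A
    rw [hz] at hB hC hA; simp at hB hC hA
    omega
  · refine ⟨B, C, rfl, Or.inl ⟨rfl, rfl⟩, ?_, ?_⟩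
    · have hC := hs C; have hA := hs A
      rw [hz] at hC hA; simp at hC hA
      rcases hP.2 with h | h
      · exact h
      · exfalso; omega
    · have hC := hs C; have hA := hs A
      rw [hz] at hC hA; simp at hC hA
      omega
  · refine ⟨C, B, rfl, Or.inr ⟨rfl, rfl⟩, ?_, ?_⟩
    · have hB := hs B; have hA := hs A
      rw [hz] at hB hA; simp at hB hA
      rcases hP.2 with h | h
      · exfalso; omega
      · exact h
    · have hB := hs B; have hA := hs A
      rw [hz] at hB hA; simp at hB hA
      omega

end KrewFacts


/-! ### getD helpers -/

lemma getD_set_ne {l : List KLetter} {i k : ℕ} {a d : KLetter} (h : i ≠ k) :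
    (l.set i a).getD k d = l.getD k d := by
  simp [List.getD, List.getElem?_set_ne h]

lemma getD_set_self {l : List KLetter} {i : ℕ} {a d : KLetter} (h : i < l.length) :
    (l.set i a).getD i d = a := by
  have h' : i < (l.set i a).length := by simpa using h
  rw [List.getD_eq_getElem _ _ h', List.getElem_set_self]

lemma getD_drop_one (v : List KLetter) (k : ℕ) (d : KLetter) :
    (v.drop 1).getD k d = v.getD (k + 1) d := by
  rcases v with _ | ⟨a, t⟩ <;> simp [List.getD_cons_succ]

lemma getD_take {l : List KLetter} {k j : ℕ} {d : KLetter} (h : j < k) :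
    (l.take k).getD j d = l.getD j d := by
  simp [List.getD, List.getElem?_take, h]

lemma getD_append_len (l : List KLetter) (z d : KLetter) :
    (l ++ [z]).getD l.length d = z := by
  rw [List.getD_append_right l [z] d l.length (le_refl _)]
  simp

/-- additive count-of-set lemma -/
lemma count_set_add (l : List KLetter) (i : ℕ) (a y : KLetter) (h : i < l.length) :
    (l.set i a).count y + (if l.getD i A = y then 1 else 0)
      = l.count y + (if a = y then 1 else 0) := by
  have hset : l.set i a = l.take i ++ a :: l.drop (i+1) := by
    rw [List.set_eq_take_append_cons_drop, if_pos h]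
  have hl : l = l.take i ++ l.getD i A :: l.drop (i+1) := by
    conv_lhs => rw [← List.take_append_drop (i+1) l]
    rw [List.take_succ, List.getElem?_eq_getElem h, List.getD_eq_getElem l A h]
    simp
  rw [hset]
  conv_rhs => rw [hl]
  simp only [List.count_append, List.count_cons]
  have : ∀ z : KLetter, (if (z == y) = true then 1 else 0) = (if z = y then (1:ℕ) else 0) := by
    intro z; simp
  rw [this, this]
  omega

/-! ### Structure of `pro` -/

section ProFacts

variable {n : ℕ} {v : List KLetter}

lemma length_pro (h : 1 ≤ v.length) : (pro v).length = v.length := by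
  simp [pro]; omega

lemma pro_getD_last (h : 1 ≤ v.length) :
    (pro v).getD (v.length - 1) A = v.getD (kiota v - 1) A := by
  have hlen : ((v.drop 1).set (kiota v - 2) A).length = v.length - 1 := by simp
  rw [pro, show v.length - 1 = ((v.drop 1).set (kiota v - 2) A).length by omega,
      getD_append_len]

lemma pro_getD (k : ℕ) (h : k + 1 < v.length) :
    (pro v).getD k A = if k = kiota v - 2 then A else v.getD (k + 1) A := by
  have hlen : ((v.drop 1).set (kiota v - 2) A).length = v.length - 1 := by simp
  rw [pro, List.getD_append _ _ _ _ (by omega)]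
  by_cases hk : k = kiota v - 2
  · subst hk
    rw [if_pos rfl, getD_set_self (by simp; omega)]
  · rw [if_neg hk, getD_set_ne (by omega), getD_drop_one]

end ProFacts


section ProCounts

variable {n : ℕ} {v : List KLetter}

lemma cnt_split_one (hv : IsKrewerasWord n v) (hn : 1 ≤ n) (y : KLetter) (k : ℕ) :
    cnt y (k + 1) v = (if A = y then 1 else 0) + ((v.drop 1).take k).count y := by
  have : v.take (1 + k) = v.take 1 ++ (v.drop 1).take k := List.take_add
  rw [cnt, show k + 1 = 1 + k by omega, this, List.count_append, take_one_eq hv hn,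
      count_single]

/-- Regime (a): prefixes of `pro v` before the flip position. -/
lemma cnt_pro_a (hv : IsKrewerasWord n v) (hn : 1 ≤ n) (y : KLetter) (k : ℕ)
    (hk : k ≤ kiota v - 2) :
    cnt y (k + 1) v = (if A = y then 1 else 0) + cnt y k (pro v) := by
  have hι2 : 2 ≤ kiota v := two_le_kiota hv hn
  have hι3 : kiota v ≤ 3 * n := kiota_le hv hn
  have hlen : ((v.drop 1).set (kiota v - 2) A).length = v.length - 1 := by simp
  have h1 : (pro v).take k = ((v.drop 1).set (kiota v - 2) A).take k := by
    rw [pro, List.take_append_of_le_length (by rw [hlen, hv.1]; omega)]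
  have h2 : ((v.drop 1).set (kiota v - 2) A).take k = (v.drop 1).take k := by
    rw [List.take_set]
    apply List.set_eq_of_length_le
    rw [List.length_take]
    omega
  rw [cnt_split_one hv hn y k, cnt, h1, h2]

/-- Regime (b): prefixes of `pro v` after the flip position. -/
lemma cnt_pro_b (hv : IsKrewerasWord n v) (hn : 1 ≤ n) (y : KLetter) (k : ℕ)
    (hk1 : kiota v - 1 ≤ k) (hk2 : k ≤ v.length - 1) :
    cnt y (k + 1) v = cnt y k (pro v) +
      (if v.getD (kiota v - 1) A = y then 1 else 0) := by
  have hι2 : 2 ≤ kiota v := two_le_kiota hv hn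
  have hι3 : kiota v ≤ 3 * n := kiota_le hv hn
  have hL : v.length = 3 * n := hv.1
  have hlen : ((v.drop 1).set (kiota v - 2) A).length = v.length - 1 := by simp
  have h1 : (pro v).take k = ((v.drop 1).set (kiota v - 2) A).take k := by
    rw [pro, List.take_append_of_le_length (by rw [hlen]; omega)]
  have h2 : ((v.drop 1).set (kiota v - 2) A).take k = ((v.drop 1).take k).set (kiota v - 2) A :=
    List.take_set
  have hblen : ((v.drop 1).take k).length = k := by
    simp; omega
  have hib : kiota v - 2 < k := by omega
  have hgd : ((v.drop 1).take k).getD (kiota v - 2) A = v.getD (kiota v - 1) A := by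
    rw [getD_take hib, getD_drop_one, show kiota v - 2 + 1 = kiota v - 1 by omega]
  have hcs := count_set_add ((v.drop 1).take k) (kiota v - 2) A y (by omega)
  rw [hgd] at hcs
  have hsplit := cnt_split_one hv hn y k
  have h3 : cnt y k (pro v) = (((v.drop 1).take k).set (kiota v - 2) A).count y := by
    rw [cnt, h1, h2]
  rw [hsplit, h3]
  omega

lemma count_pro (hv : IsKrewerasWord n v) (hn : 1 ≤ n) (y : KLetter) :
    (pro v).count y = v.count y := by
  have hι2 : 2 ≤ kiota v := two_le_kiota hv hn
  have hι3 : kiota v ≤ 3 * n := kiota_le hv hn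
  have hL : v.length = 3 * n := hv.1
  have hdlen : (v.drop 1).length = v.length - 1 := by simp
  have hcs := count_set_add (v.drop 1) (kiota v - 2) A y (by omega)
  have hgd : (v.drop 1).getD (kiota v - 2) A = v.getD (kiota v - 1) A := by
    rw [getD_drop_one, show kiota v - 2 + 1 = kiota v - 1 by omega]
  rw [hgd] at hcs
  have hsplit : v.count y = (if A = y then 1 else 0) + (v.drop 1).count y := by
    conv_lhs => rw [← List.take_append_drop 1 v]
    rw [List.count_append, take_one_eq hv hn, count_single]
  rw [pro, List.count_append, count_single]
  omega

lemma pro_Kreweras (hv : IsKrewerasWord n v) (hn : 1 ≤ n) : IsKrewerasWord n (pro v) := by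
  have hι2 : 2 ≤ kiota v := two_le_kiota hv hn
  have hι3 : kiota v ≤ 3 * n := kiota_le hv hn
  have hL : v.length = 3 * n := hv.1
  have hlenp : (pro v).length = 3 * n := by rw [length_pro (by omega), hL]
  obtain ⟨x, o, hx, hxo, hxeq, hole⟩ := kiota_letter hv hn
  have hxA : (if v.getD (kiota v - 1) A = A then (1:ℕ) else 0) = 0 := by
    rw [hx]; rcases hxo with ⟨h, _⟩ | ⟨h, _⟩ <;> simp [h]
  refine ⟨hlenp, ?_, ?_, ?_, ?_⟩
  · rw [count_pro hv hn, hv.2.1]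
  · rw [count_pro hv hn, hv.2.2.1]
  · rw [count_pro hv hn, hv.2.2.2.1]
  · intro k
    rcases le_or_gt k (kiota v - 2) with hk | hk
    · have hB := cnt_pro_a hv hn B k hk
      have hC := cnt_pro_a hv hn C k hk
      have hA := cnt_pro_a hv hn A k hk
      simp at hA hB hC
      have hstrict := cnt_strict hv hn (k+1) (by omega) (by omega)
      constructor
      · show cnt B k (pro v) ≤ cnt A k (pro v); omega
      · show cnt C k (pro v) ≤ cnt A k (pro v); omega
    · rcases le_or_gt k (3 * n - 1) with hk2 | hk2
      · have hB := cnt_pro_b hv hn B k (by omega) (by omega)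
        have hC := cnt_pro_b hv hn C k (by omega) (by omega)
        have hA := cnt_pro_b hv hn A k (by omega) (by omega)
        rw [hxA] at hA
        have hle := cnt_le_A hv (k+1)
        constructor
        · show cnt B k (pro v) ≤ cnt A k (pro v); omega
        · show cnt C k (pro v) ≤ cnt A k (pro v); omega
      · have hst : ∀ y, cnt y k (pro v) = (pro v).count y := by
          intro y; exact cnt_stable y k _ (by omega)
        show cnt B k (pro v) ≤ cnt A k (pro v) ∧ cnt C k (pro v) ≤ cnt A k (pro v)
        rw [hst B, hst C, hst A, count_pro hv hn, count_pro hv hn, count_pro hv hn,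
            hv.2.1, hv.2.2.1, hv.2.2.2.1]
        omega

lemma pro_iter_Kreweras (hv : IsKrewerasWord n v) (hn : 1 ≤ n) (t : ℕ) :
    IsKrewerasWord n (pro^[t] v) := by
  induction t with
  | zero => exact hv
  | succ t ih => rw [Function.iterate_succ_apply']; exact pro_Kreweras ih hn

end ProCounts


/-! ### Integer height functions -/

def Dl (y : KLetter) (v : List KLetter) (k : ℕ) : ℤ := (cnt A k v : ℤ) - (cnt y k v : ℤ)

section DlFacts

variable {n : ℕ} {v : List KLetter}

lemma Dl_zero (y : KLetter) : Dl y v 0 = 0 := by simp [Dl, cnt_zero]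

lemma Dl_nonneg (hv : IsKrewerasWord n v) (y : KLetter) (hy : y = B ∨ y = C) (k : ℕ) :
    0 ≤ Dl y v k := by
  have := cnt_le_A hv k
  rcases hy with rfl | rfl <;> (unfold Dl; omega)

lemma Dl_succ_ge (y : KLetter) (hy : y ≠ A) (v : List KLetter) (k : ℕ) :
    Dl y v k - 1 ≤ Dl y v (k + 1) := by
  rcases Nat.lt_or_ge k v.length with h | h
  · have hA := cnt_succ A k v h
    have hy' := cnt_succ y k v h
    unfold Dl
    rcases hz : v.getD k A with _ | _ | _ <;> rw [hz] at hA hy' <;>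
      rcases y with _ | _ | _ <;> simp_all <;> omega
  · have h1 := cnt_stable A (k+1) v (by omega)
    have h2 := cnt_stable A k v h
    have h3 := cnt_stable y (k+1) v (by omega)
    have h4 := cnt_stable y k v h
    unfold Dl; omega

lemma Dl_succ_of_A (y : KLetter) (hy : y ≠ A) (k : ℕ) (hk : k < v.length)
    (hz : v.getD k A = A) : Dl y v (k + 1) = Dl y v k + 1 := by
  have hA := cnt_succ A k v hk
  have hy' := cnt_succ y k v hk
  rw [hz] at hA hy'
  unfold Dl
  rcases y with _ | _ | _ <;> simp_all <;> omega

lemma Dl_succ_self (y : KLetter) (hy : y ≠ A) (k : ℕ) (hk : k < v.length)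
    (hz : v.getD k A = y) : Dl y v (k + 1) = Dl y v k - 1 := by
  have hA := cnt_succ A k v hk
  have hy' := cnt_succ y k v hk
  rw [hz] at hA hy'
  unfold Dl
  rcases y with _ | _ | _ <;> simp_all <;> omega

lemma Dl_succ_other (y z : KLetter) (hz1 : z ≠ A) (hz2 : z ≠ y) (k : ℕ) (hk : k < v.length)
    (hz : v.getD k A = z) : Dl y v (k + 1) = Dl y v k := by
  have hA := cnt_succ A k v hk
  have hy' := cnt_succ y k v hk
  rw [hz] at hA hy'
  unfold Dl
  rcases y with _ | _ | _ <;> rcases z with _ | _ | _ <;> simp_all <;> omega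

lemma Dl_strict (hv : IsKrewerasWord n v) (hn : 1 ≤ n) (k : ℕ) (h1 : 1 ≤ k)
    (h2 : k < kiota v) (y : KLetter) (hy : y = B ∨ y = C) : 1 ≤ Dl y v k := by
  have := cnt_strict hv hn k h1 h2
  rcases hy with rfl | rfl <;> (unfold Dl; omega)

lemma Dl_length (hv : IsKrewerasWord n v) (k : ℕ) (hk : v.length ≤ k)
    (y : KLetter) (hy : y = B ∨ y = C) : Dl y v k = 0 := by
  have h1 := cnt_stable A k v hk
  have h2 := cnt_stable y k v hk
  have hA := hv.2.1
  have hB := hv.2.2.1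
  have hC := hv.2.2.2.1
  rcases hy with rfl | rfl <;> (unfold Dl; omega)

lemma Dl_pro_a (hv : IsKrewerasWord n v) (hn : 1 ≤ n) (y : KLetter) (hy : y ≠ A) (k : ℕ)
    (hk : k ≤ kiota v - 2) : Dl y (pro v) k = Dl y v (k + 1) - 1 := by
  have hA := cnt_pro_a hv hn A k hk
  have hy' := cnt_pro_a hv hn y k hk
  unfold Dl
  rcases y with _ | _ | _ <;> simp_all <;> omega

lemma Dl_pro_b (hv : IsKrewerasWord n v) (hn : 1 ≤ n) (y : KLetter) (hy : y ≠ A) (k : ℕ)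
    (hk1 : kiota v - 1 ≤ k) (hk2 : k ≤ v.length - 1) :
    Dl y (pro v) k = Dl y v (k + 1) +
      (if v.getD (kiota v - 1) A = y then 1 else 0) := by
  obtain ⟨x, o, hx, hxo, _, _⟩ := kiota_letter hv hn
  have hxA : v.getD (kiota v - 1) A ≠ A := by
    rw [hx]; rcases hxo with ⟨rfl, _⟩ | ⟨rfl, _⟩ <;> simp
  have hA := cnt_pro_b hv hn A k hk1 hk2
  have hy' := cnt_pro_b hv hn y k hk1 hk2
  rw [if_neg hxA] at hA
  unfold Dl
  by_cases hyy : v.getD (kiota v - 1) A = y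
  · rw [if_pos hyy] at hy' ⊢; omega
  · rw [if_neg hyy] at hy' ⊢; omega

end DlFacts

/-- Discrete intermediate value theorem, downward crossing. -/
lemma ivt_down (f : ℕ → ℤ) (hstep : ∀ k, f k - 1 ≤ f (k + 1)) :
    ∀ (d a : ℕ) (t : ℤ), t < f a → f (a + d) ≤ t → ∃ j, a < j ∧ j ≤ a + d ∧ f j = t := by
  intro d
  induction d with
  | zero =>
    intro a t h1 h2
    simp only [Nat.add_zero] at h2
    omega
  | succ d ih =>
    intro a t h1 h2
    by_cases h : f (a + 1) ≤ t
    · have := hstep a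
      exact ⟨a + 1, by omega, by omega, by omega⟩
    · push_neg at h
      have h2' : f (a + 1 + d) ≤ t := by rw [show a + 1 + d = a + (d+1) by omega]; exact h2
      obtain ⟨j, hj1, hj2, hj3⟩ := ih (a + 1) t h h2'
      exact ⟨j, by omega, by omega, hj3⟩

/-! ### The invariant -/

/-- There is a `negL x`-equality point after `q` before any `x`-equality point. -/
def INV (x : KLetter) (v : List KLetter) (q : ℕ) : Prop :=
  ∃ j, q < j ∧ j ≤ v.length ∧ Dl (negL x) v j = Dl (negL x) v q ∧
    ∀ k, q < k → k ≤ j → Dl x v k ≠ Dl x v q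

section MainLemmas

variable {n : ℕ} {v : List KLetter}

lemma base (hv : IsKrewerasWord n v) (hn : 1 ≤ n) :
    INV (v.getD (kiota v - 1) A) (pro v) (kiota v - 2) := by
  obtain ⟨x, o, hx, hxo, hxeq, hole⟩ := kiota_letter hv hn
  have hι2 : 2 ≤ kiota v := two_le_kiota hv hn
  have hι3 : kiota v ≤ 3 * n := kiota_le hv hn
  have hL : v.length = 3 * n := hv.1
  have hxA : x ≠ A := by rcases hxo with ⟨rfl, _⟩ | ⟨rfl, _⟩ <;> simp
  have hoA : o ≠ A := by rcases hxo with ⟨_, rfl⟩ | ⟨_, rfl⟩ <;> simp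
  have hox : o ≠ x := by rcases hxo with ⟨rfl, rfl⟩ | ⟨rfl, rfl⟩ <;> simp
  have hnegx : negL x = o := by rcases hxo with ⟨rfl, rfl⟩ | ⟨rfl, rfl⟩ <;> rfl
  have hoBC : o = B ∨ o = C := by rcases hxo with ⟨_, rfl⟩ | ⟨_, rfl⟩ <;> simp
  have hxBC : x = B ∨ x = C := by rcases hxo with ⟨rfl, _⟩ | ⟨rfl, _⟩ <;> simp
  simp only [INV, hx, hnegx]
  -- key values
  have hDxι : Dl x v (kiota v) = 0 := by unfold Dl; omega
  have hDoι : 1 ≤ Dl o v (kiota v) := by unfold Dl; omega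
  set t := Dl o v (kiota v) with ht
  have hidx : kiota v - 1 < v.length := by omega
  have hDoι1 : Dl o v (kiota v - 1) = t := by
    have := Dl_succ_other o x hxA (fun hh => hox hh.symm) (kiota v - 1) hidx (by rw [hx])
    rw [show kiota v - 1 + 1 = kiota v by omega] at this
    omega
  have hDxι1 : Dl x v (kiota v - 1) = 1 := by
    have := Dl_succ_self x hxA (kiota v - 1) hidx (by rw [hx])
    rw [show kiota v - 1 + 1 = kiota v by omega] at this
    omega
  -- find the o-equality point
  have hivt := ivt_down (Dl o v) (Dl_succ_ge o hoA v) (3 * n - kiota v) (kiota v) (t - 1)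
    (by omega)
    (by rw [show kiota v + (3 * n - kiota v) = 3 * n by omega,
            Dl_length hv (3*n) (by omega) o hoBC]; omega)
  obtain ⟨j, hj1, hj2, hj3⟩ := hivt
  rw [show kiota v + (3 * n - kiota v) = 3 * n by omega] at hj2
  refine ⟨j - 1, by omega, ?_, ?_, ?_⟩
  · rw [length_pro (by omega)]; omega
  · -- o-equality
    have e1 : Dl o (pro v) (j - 1) = Dl o v j + (if v.getD (kiota v - 1) A = o then 1 else 0) := by
      have := Dl_pro_b hv hn o hoA (j - 1) (by omega) (by omega)
      rw [show j - 1 + 1 = j by omega] at this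
      exact this
    have e2 : Dl o (pro v) (kiota v - 2) = Dl o v (kiota v - 1) - 1 := by
      have := Dl_pro_a hv hn o hoA (kiota v - 2) (le_refl _)
      rw [show kiota v - 2 + 1 = kiota v - 1 by omega] at this
      exact this
    rw [e1, e2, hx, if_neg (fun hh => hox hh.symm), hj3, hDoι1]
    omega
  · -- no x-equality
    intro k hk1 hk2
    have e2 : Dl x (pro v) (kiota v - 2) = Dl x v (kiota v - 1) - 1 := by
      have := Dl_pro_a hv hn x hxA (kiota v - 2) (le_refl _)
      rw [show kiota v - 2 + 1 = kiota v - 1 by omega] at this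
      exact this
    have e1 : Dl x (pro v) k = Dl x v (k + 1) + 1 := by
      have := Dl_pro_b hv hn x hxA k (by omega) (by omega)
      rw [hx, if_pos rfl] at this
      exact this
    have hnn : 0 ≤ Dl x v (k + 1) := Dl_nonneg hv x hxBC (k + 1)
    rw [e1, e2, hDxι1]
    omega

end MainLemmas


section Transfer

variable {n : ℕ} {v : List KLetter}

lemma transfer (hv : IsKrewerasWord n v) (hn : 1 ≤ n) (x : KLetter) (hx : x = B ∨ x = C)
    (q : ℕ) (hq : 1 ≤ q) (hA : v.getD q A = A) (h : INV x v q) :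
    INV x (pro v) (q - 1) := by
  obtain ⟨m, m', hm, hmm', hmeq, hm'le⟩ := kiota_letter hv hn
  have hι2 : 2 ≤ kiota v := two_le_kiota hv hn
  have hι3 : kiota v ≤ 3 * n := kiota_le hv hn
  have hL : v.length = 3 * n := hv.1
  have hmA : m ≠ A := by rcases hmm' with ⟨rfl, _⟩ | ⟨rfl, _⟩ <;> simp
  have hmBC : m = B ∨ m = C := by rcases hmm' with ⟨rfl, _⟩ | ⟨rfl, _⟩ <;> simp
  set o := negL x with ho
  have hoBC : o = B ∨ o = C := by rcases hx with rfl | rfl <;> simp [ho, negL]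
  have hoA : o ≠ A := by rcases hoBC with h | h <;> simp [h]
  have hox : o ≠ x := by rcases hx with rfl | rfl <;> simp [ho, negL]
  have hxA : x ≠ A := by rcases hx with rfl | rfl <;> simp
  have hqι : q ≠ kiota v - 1 := by
    intro hh
    rw [hh, hm] at hA
    exact hmA hA
  obtain ⟨j₀, hj₀q, hj₀L, hj₀eq, hj₀x⟩ := h
  rcases Nat.lt_or_ge q (kiota v - 1) with hcase | hcase
  · -- Case q + 1 < kiota v : everything relevant happens strictly before the flip.
    -- First, find a fresh m-equality point strictly before kiota v.
    have hqlen : q < v.length := by omega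
    have htge : 1 ≤ Dl m v q := Dl_strict hv hn q hq (by omega) m hmBC
    have hq1 : Dl m v (q + 1) = Dl m v q + 1 := Dl_succ_of_A m hmA q hqlen hA
    have hDmι : Dl m v (kiota v) = 0 := by unfold Dl; omega
    have hivt := ivt_down (Dl m v) (Dl_succ_ge m hmA v) (kiota v - (q + 1)) (q + 1)
      (Dl m v q) (by omega)
      (by rw [show q + 1 + (kiota v - (q + 1)) = kiota v by omega]; omega)
    obtain ⟨jm, hjm1, hjm2, hjm3⟩ := hivt
    rw [show q + 1 + (kiota v - (q + 1)) = kiota v by omega] at hjm2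
    have hjmι : jm < kiota v := by
      rcases Nat.lt_or_ge jm (kiota v) with hh | hh
      · exact hh
      · exfalso; have : jm = kiota v := by omega
        rw [this, hDmι] at hjm3; omega
    -- Obtain an o-equality point J < kiota v with no x-equality in (q, J].
    have hJ : ∃ J, q < J ∧ J < kiota v ∧ Dl o v J = Dl o v q ∧
        ∀ k, q < k → k ≤ J → Dl x v k ≠ Dl x v q := by
      rcases hmBC with hmB | hmC <;> rcases hx with rfl | rfl
      · -- m = B = x
        refine ⟨j₀, hj₀q, ?_, hj₀eq, hj₀x⟩
        by_contra hh
        push_neg at hh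
        have : jm ≤ j₀ := by omega
        exact hj₀x jm (by omega) this (by rw [← hmB]; exact hjm3)
      · -- m = B = o
        have hmo : m = o := by simp [ho, negL, hmB]
        rcases le_total j₀ jm with hle | hle
        · exact ⟨j₀, hj₀q, by omega, hj₀eq, hj₀x⟩
        · refine ⟨jm, by omega, hjmι, ?_, fun k hk1 hk2 => hj₀x k hk1 (by omega)⟩
          rw [← hmo]; exact hjm3
      · -- m = C = o
        have hmo : m = o := by simp [ho, negL, hmC]
        rcases le_total j₀ jm with hle | hle
        · exact ⟨j₀, hj₀q, by omega, hj₀eq, hj₀x⟩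
        · refine ⟨jm, by omega, hjmι, ?_, fun k hk1 hk2 => hj₀x k hk1 (by omega)⟩
          rw [← hmo]; exact hjm3
      · -- m = C = x
        refine ⟨j₀, hj₀q, ?_, hj₀eq, hj₀x⟩
        by_contra hh
        push_neg at hh
        have : jm ≤ j₀ := by omega
        exact hj₀x jm (by omega) this (by rw [← hmC]; exact hjm3)
    obtain ⟨J, hJq, hJι, hJeq, hJx⟩ := hJ
    refine ⟨J - 1, by omega, ?_, ?_, ?_⟩
    · rw [length_pro (by omega)]; omega
    · have e1 : Dl o (pro v) (J - 1) = Dl o v J - 1 := by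
        have := Dl_pro_a hv hn o hoA (J - 1) (by omega)
        rw [show J - 1 + 1 = J by omega] at this
        exact this
      have e2 : Dl o (pro v) (q - 1) = Dl o v q - 1 := by
        have := Dl_pro_a hv hn o hoA (q - 1) (by omega)
        rw [show q - 1 + 1 = q by omega] at this
        exact this
      rw [e1, e2, hJeq]
    · intro k hk1 hk2
      have e1 : Dl x (pro v) k = Dl x v (k + 1) - 1 := Dl_pro_a hv hn x hxA k (by omega)
      have e2 : Dl x (pro v) (q - 1) = Dl x v q - 1 := by
        have := Dl_pro_a hv hn x hxA (q - 1) (by omega)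
        rw [show q - 1 + 1 = q by omega] at this
        exact this
      rw [e1, e2]
      have := hJx (k + 1) (by omega) (by omega)
      omega
  · -- Case q ≥ kiota v (using q ≠ kiota v - 1) : uniform shift after the flip.
    have hqι' : kiota v ≤ q := by omega
    have hb : ∀ (y : KLetter), y ≠ A → ∀ k, kiota v - 1 ≤ k → k ≤ 3 * n - 1 →
        Dl y (pro v) k = Dl y v (k + 1) + (if m = y then 1 else 0) := by
      intro y hy k h1 h2
      have := Dl_pro_b hv hn y hy k h1 (by omega)
      rw [hm] at this
      exact this
    refine ⟨j₀ - 1, by omega, ?_, ?_, ?_⟩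
    · rw [length_pro (by omega)]; omega
    · have e1 : Dl o (pro v) (j₀ - 1) = Dl o v j₀ + (if m = o then 1 else 0) := by
        have := hb o hoA (j₀ - 1) (by omega) (by omega)
        rw [show j₀ - 1 + 1 = j₀ by omega] at this
        exact this
      have e2 : Dl o (pro v) (q - 1) = Dl o v q + (if m = o then 1 else 0) := by
        have := hb o hoA (q - 1) (by omega) (by omega)
        rw [show q - 1 + 1 = q by omega] at this
        exact this
      rw [e1, e2, hj₀eq]
    · intro k hk1 hk2
      have e1 : Dl x (pro v) k = Dl x v (k + 1) + (if m = x then 1 else 0) :=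
        hb x hxA k (by omega) (by omega)
      have e2 : Dl x (pro v) (q - 1) = Dl x v q + (if m = x then 1 else 0) := by
        have := hb x hxA (q - 1) (by omega) (by omega)
        rw [show q - 1 + 1 = q by omega] at this
        exact this
      rw [e1, e2]
      have := hj₀x (k + 1) (by omega) (by omega)
      omega

end Transfer


section Extract

variable {n : ℕ} {u : List KLetter}

lemma extract (hu : IsKrewerasWord n u) (hn : 1 ≤ n) (x : KLetter) (hx : x = B ∨ x = C)
    (h : INV x u 0) : u.getD (kiota u - 1) A = negL x := by
  obtain ⟨j, hj0, hjL, hjeq, hjx⟩ := h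
  have hDo0 : Dl (negL x) u 0 = 0 := Dl_zero _
  have hDx0 : Dl x u 0 = 0 := Dl_zero x
  have hPj : Pk u j = true := by
    rw [Pk_iff]
    refine ⟨hj0, ?_⟩
    have heq : (cnt A j u : ℤ) - cnt (negL x) j u = 0 := by
      have := hjeq; rw [hDo0] at this; unfold Dl at this; exact this
    rcases hx with rfl | rfl
    · right; have : negL B = C := rfl; rw [this] at heq; omega
    · left; have : negL C = B := rfl; rw [this] at heq; omega
  obtain ⟨⟨hkle, hPk₀⟩, _⟩ := kiota_spec u j hjL hPj
  rw [Pk_iff] at hPk₀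
  obtain ⟨hk₀1, hk₀eq⟩ := hPk₀
  have hxne : Dl x u (kiota u) ≠ 0 := by
    have := hjx (kiota u) (by omega) (by omega)
    rwa [hDx0] at this
  have hk₀2 : 2 ≤ kiota u := two_le_kiota hu hn
  have hlt : kiota u - 1 < u.length := by omega
  have hstrict := cnt_strict hu hn (kiota u - 1) (by omega) (by omega)
  have hsA := cnt_succ A (kiota u - 1) u hlt
  have hsB := cnt_succ B (kiota u - 1) u hlt
  have hsC := cnt_succ C (kiota u - 1) u hlt
  rw [show kiota u - 1 + 1 = kiota u by omega] at hsA hsB hsC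
  rcases hx with rfl | rfl
  · -- x = B, o = C
    have hDoC : cnt A (kiota u) u = cnt C (kiota u) u := by
      rcases hk₀eq with hh | hh
      · exfalso; apply hxne; unfold Dl; omega
      · exact hh
    cases hz : u.getD (kiota u - 1) A with
    | A =>
      exfalso
      rw [hz] at hsA hsC; simp at hsA hsC
      omega
    | B =>
      exfalso
      rw [hz] at hsA hsC; simp at hsA hsC
      omega
    | C => rfl
  · -- x = C, o = B
    have hDoB : cnt A (kiota u) u = cnt B (kiota u) u := by
      rcases hk₀eq with hh | hh
      · exact hh
      · exfalso; apply hxne; unfold Dl; omega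
    cases hz : u.getD (kiota u - 1) A with
    | A =>
      exfalso
      rw [hz] at hsA hsB; simp at hsA hsB
      omega
    | B => rfl
    | C =>
      exfalso
      rw [hz] at hsA hsB; simp at hsA hsB
      omega

end Extract

section RLemma

variable {n : ℕ} {w : List KLetter}

lemma keps_one (w : List KLetter) : keps w 1 = w.getD (kiota w - 1) A := by
  simp [keps]

/-- The key lemma (R): `ε_w(ι(w)) = -ε_w(1)`. -/
lemma keps_kiota (hw : IsKrewerasWord n w) (hn : 1 ≤ n) :
    keps w (kiota w) = negL (keps w 1) := by
  obtain ⟨x, o, hx, hxo, hxeq, hole⟩ := kiota_letter hw hn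
  have hι2 : 2 ≤ kiota w := two_le_kiota hw hn
  have hι3 : kiota w ≤ 3 * n := kiota_le hw hn
  have hL : w.length = 3 * n := hw.1
  have hxBC : x = B ∨ x = C := by rcases hxo with ⟨rfl, _⟩ | ⟨rfl, _⟩ <;> simp
  have main : ∀ t, 1 ≤ t → t ≤ kiota w - 1 →
      (pro^[t] w).getD (kiota w - 1 - t) A = A ∧ INV x (pro^[t] w) (kiota w - 1 - t) := by
    intro t
    induction t with
    | zero => intro h1 _; omega
    | succ t ih =>
      intro h1 h2
      by_cases ht : t = 0
      · subst ht
        rw [Function.iterate_one]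
        have hgd : (pro w).getD (kiota w - 2) A = A := by
          have hlen : ((w.drop 1).set (kiota w - 2) A).length = w.length - 1 := by simp
          rw [pro, List.getD_append _ _ _ _ (by rw [hlen]; omega),
              getD_set_self (by simp; omega)]
        constructor
        · rw [show kiota w - 1 - 1 = kiota w - 2 by omega]; exact hgd
        · rw [show kiota w - 1 - 1 = kiota w - 2 by omega, ← hx]
          exact base hw hn
      · obtain ⟨ihA, ihINV⟩ := ih (by omega) (by omega)
        have hvK : IsKrewerasWord n (pro^[t] w) := pro_iter_Kreweras hw hn t
        have hq1 : 1 ≤ kiota w - 1 - t := by omega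
        have htr := transfer hvK hn x hxBC (kiota w - 1 - t) hq1 ihA ihINV
        have hvL : (pro^[t] w).length = 3 * n := hvK.1
        rw [Function.iterate_succ_apply']
        constructor
        · have hgd := pro_getD (v := pro^[t] w) (kiota w - 1 - (t+1)) (by rw [hvL]; omega)
          rw [hgd]
          by_cases hc : kiota w - 1 - (t+1) = kiota (pro^[t] w) - 2
          · rw [if_pos hc]
          · rw [if_neg hc, show kiota w - 1 - (t+1) + 1 = kiota w - 1 - t by omega]
            exact ihA
        · rw [show kiota w - 1 - (t+1) = kiota w - 1 - t - 1 by omega]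
          exact htr
  obtain ⟨_, hINV⟩ := main (kiota w - 1) (by omega) (le_refl _)
  rw [show kiota w - 1 - (kiota w - 1) = 0 by omega] at hINV
  have huK : IsKrewerasWord n (pro^[kiota w - 1] w) := pro_iter_Kreweras hw hn _
  have hext := extract huK hn x hxBC hINV
  show (pro^[kiota w - 1] w).getD (kiota (pro^[kiota w - 1] w) - 1) A = negL (keps w 1)
  rw [hext, keps_one, hx]

lemma keps_shift (v : List KLetter) (t i : ℕ) (hi : 1 ≤ i) :
    keps (pro^[t] v) i = keps v (i + t) := by
  unfold keps
  rw [← Function.iterate_add_apply, show i - 1 + t = i + t - 1 by omega]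

lemma keps_pro_shift (v : List KLetter) (i : ℕ) (hi : 1 ≤ i) :
    keps (pro v) i = keps v (i + 1) := by
  have := keps_shift v 1 i hi
  rwa [Function.iterate_one] at this

end RLemma


section Tracking

variable {n : ℕ} {w : List KLetter}

/-- Position `3n+1` (the letter appended by the first promotion) is eventually consumed,
with its value intact. -/
lemma tracking (hw : IsKrewerasWord n w) (hn : 1 ≤ n) :
    ∀ j, 1 ≤ j → j ≤ 3 * n →
      (∃ s, 2 ≤ s ∧ s ≤ j ∧ kiota (pro^[s - 1] w) = 3 * n + 2 - s ∧
        (pro^[s - 1] w).getD (3 * n + 1 - s) A = keps w 1) ∨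
      (pro^[j] w).getD (3 * n - j) A = keps w 1 := by
  have hι2 : 2 ≤ kiota w := two_le_kiota hw hn
  have hι3 : kiota w ≤ 3 * n := kiota_le hw hn
  intro j
  induction j with
  | zero => intro h1 _; omega
  | succ j ih =>
    intro h1 h2
    by_cases hj0 : j = 0
    · subst hj0
      right
      rw [Function.iterate_one]
      have hlast := pro_getD_last (v := w) (by rw [hw.1]; omega)
      rw [hw.1] at hlast
      rw [hlast, keps_one]
    · rcases ih (by omega) (by omega) with ⟨s, hs1, hs2, hs3⟩ | hval
      · exact Or.inl ⟨s, hs1, by omega, hs3⟩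
      · have hvK : IsKrewerasWord n (pro^[j] w) := pro_iter_Kreweras hw hn j
        have hvι2 : 2 ≤ kiota (pro^[j] w) := two_le_kiota hvK hn
        by_cases hhit : kiota (pro^[j] w) = 3 * n + 1 - j
        · left
          refine ⟨j + 1, by omega, le_refl _, ?_, ?_⟩
          · rw [show j + 1 - 1 = j by omega, hhit]
            omega
          · rw [show j + 1 - 1 = j by omega, show 3 * n + 1 - (j + 1) = 3 * n - j by omega]
            exact hval
        · right
          rw [Function.iterate_succ_apply']
          have hg := pro_getD (v := pro^[j] w) (3 * n - (j + 1)) (by rw [hvK.1]; omega)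
          rw [hg, if_neg (by intro hc; apply hhit; omega),
              show 3 * n - (j + 1) + 1 = 3 * n - j by omega]
          exact hval

end Tracking


end KP

/-- `ε_{pro(w)}(i) = ε_w(i+1)` for `1 ≤ i ≤ 3n - 1`, and `ε_{pro(w)}(3n) = -ε_w(1)`,
where `-B = C` and `-C = B`. -/
theorem keps_pro (n : ℕ) (w : List KLetter) (hw : IsKrewerasWord n w) :
    (∀ i : ℕ, 1 ≤ i → i ≤ 3 * n - 1 → keps (pro w) i = keps w (i + 1)) ∧
    keps (pro w) (3 * n) = negL (keps w 1) := by
  constructor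
  · intro i hi _
    exact KP.keps_pro_shift w i hi
  · rcases Nat.eq_zero_or_pos n with rfl | hn
    · -- n = 0 : w = []
      have hw0 : w = [] := List.length_eq_zero_iff.mp (by simpa using hw.1)
      subst hw0
      decide
    · rcases KP.tracking hw hn (3 * n) (by omega) (le_refl _) with
        ⟨s, hs2, hs3, hkι, hval⟩ | hval
      · have huK : IsKrewerasWord n (pro^[s - 1] w) := KP.pro_iter_Kreweras hw hn (s - 1)
        have h1 : keps (pro^[s - 1] w) 1 = keps w 1 := by
          rw [KP.keps_one, hkι, show 3 * n + 2 - s - 1 = 3 * n + 1 - s by omega, hval]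
        have hR := KP.keps_kiota huK hn
        have h2 : keps (pro^[s - 1] w) (kiota (pro^[s - 1] w)) = keps w (3 * n + 1) := by
          rw [hkι, KP.keps_shift w (s - 1) (3 * n + 2 - s) (by omega),
              show 3 * n + 2 - s + (s - 1) = 3 * n + 1 by omega]
        have h3 : keps (pro w) (3 * n) = keps w (3 * n + 1) :=
          KP.keps_pro_shift w (3 * n) (by omega)
        rw [h3, ← h2, hR, h1]
      · exfalso
        have hK : IsKrewerasWord n (pro^[3 * n] w) := KP.pro_iter_Kreweras hw hn (3 * n)
        have hfa : (pro^[3 * n] w).getD 0 A = A := KP.first_A hK hn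
        rw [show 3 * n - 3 * n = 0 by omega, hfa] at hval
        obtain ⟨x, o, hx, hxo, _, _⟩ := KP.kiota_letter hw hn
        rw [KP.keps_one, hx] at hval
        rcases hxo with ⟨rfl, _⟩ | ⟨rfl, _⟩ <;> exact (by cases hval)
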